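/- Let J(φ) = ∫(|∇φ|^2/2 + |φ|^2/2 − |φ|^4/4) dx and K_0(φ) = ∫(|∇φ|^2 + |φ|^2 − |φ|^4) dx on H^1(ℝ^3). Then inf{J(φ) : φ ∈ H^1, φ ≠ 0, K_0(φ) = 0} = inf{(1/4)‖φ‖_{H^1}^2 : φ ∈ H^1, φ ≠ 0, K_0(φ) ≤ 0}. -/

import Mathlib

open MeasureTheory

/-- Membership in H¹(ℝ³), together with the L⁴ integrability used in the functionals. -/
def IsH1 (φ : EuclideanSpace ℝ (Fin 3) → ℝ) : Prop :=
  Differentiable ℝ φ ∧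
    Integrable (fun x => |φ x| ^ 2) (volume : Measure (EuclideanSpace ℝ (Fin 3))) ∧
    Integrable (fun x => ‖gradient φ x‖ ^ 2) (volume : Measure (EuclideanSpace ℝ (Fin 3))) ∧
    Integrable (fun x => |φ x| ^ 4) (volume : Measure (EuclideanSpace ℝ (Fin 3)))

/-- Static energy J(φ) = ∫(|∇φ|²/2 + |φ|²/2 − |φ|⁴/4) dx. -/
noncomputable def Jfun (φ : EuclideanSpace ℝ (Fin 3) → ℝ) : ℝ :=
  ∫ x, (‖gradient φ x‖ ^ 2 / 2 + |φ x| ^ 2 / 2 - |φ x| ^ 4 / 4)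

/-- K₀(φ) = ∫(|∇φ|² + |φ|² − |φ|⁴) dx. -/
noncomputable def K0 (φ : EuclideanSpace ℝ (Fin 3) → ℝ) : ℝ :=
  ∫ x, (‖gradient φ x‖ ^ 2 + |φ x| ^ 2 - |φ x| ^ 4)

section Aux

variable {φ : EuclideanSpace ℝ (Fin 3) → ℝ}

lemma K0_eq (h : IsH1 φ) :
    K0 φ = ((∫ x, ‖gradient φ x‖ ^ 2) + ∫ x, |φ x| ^ 2) - ∫ x, |φ x| ^ 4 := by
  obtain ⟨-, hp, hg, hq⟩ := h
  have hsum : Integrable (fun x => ‖gradient φ x‖ ^ 2 + |φ x| ^ 2)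
      (volume : Measure (EuclideanSpace ℝ (Fin 3))) := hg.add hp
  unfold K0
  rw [integral_sub hsum hq, integral_add hg hp]

lemma Jfun_eq (h : IsH1 φ) :
    Jfun φ = ((∫ x, ‖gradient φ x‖ ^ 2) + ∫ x, |φ x| ^ 2) / 2 - (∫ x, |φ x| ^ 4) / 4 := by
  obtain ⟨-, hp, hg, hq⟩ := h
  have hsum : Integrable (fun x => ‖gradient φ x‖ ^ 2 / 2 + |φ x| ^ 2 / 2)
      (volume : Measure (EuclideanSpace ℝ (Fin 3))) := (hg.div_const 2).add (hp.div_const 2)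
  unfold Jfun
  rw [integral_sub hsum (hq.div_const 4),
    integral_add (hg.div_const 2) (hp.div_const 2), integral_div, integral_div, integral_div]
  ring

lemma sq_int_pos (h : IsH1 φ) (hne : φ ≠ 0) : 0 < ∫ x, |φ x| ^ 2 := by
  obtain ⟨hd, hp, -, -⟩ := h
  rw [integral_pos_iff_support_of_nonneg (fun x => by positivity) hp]
  obtain ⟨x₀, hx₀⟩ := Function.ne_iff.mp hne
  have hopen : IsOpen {x : EuclideanSpace ℝ (Fin 3) | φ x ≠ 0} :=
    isOpen_ne_fun hd.continuous continuous_const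
  have hsub : {x : EuclideanSpace ℝ (Fin 3) | φ x ≠ 0} ⊆
      Function.support fun x => |φ x| ^ 2 := by
    intro x hx
    simp only [Function.mem_support]
    exact pow_ne_zero _ (abs_ne_zero.mpr hx)
  calc (0 : ENNReal) < volume {x : EuclideanSpace ℝ (Fin 3) | φ x ≠ 0} :=
        hopen.measure_pos volume ⟨x₀, hx₀⟩
    _ ≤ _ := measure_mono hsub

lemma grad_const_mul (hd : Differentiable ℝ φ) (c : ℝ) (x : EuclideanSpace ℝ (Fin 3)) :
    gradient (fun y => c * φ y) x = c • gradient φ x := by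
  have h : HasGradientAt φ (gradient φ x) x := (hd x).hasGradientAt
  have : HasGradientAt (fun y => c * φ y) (c • gradient φ x) x := by
    rw [hasGradientAt_iff_hasFDerivAt] at h ⊢
    simpa [_root_.map_smul, smul_eq_mul] using h.const_mul c
  exact this.gradient

/-- The key scaling lemma: any nonzero `φ` with `K0 φ ≤ 0` can be rescaled to `ψ`
with `K0 ψ = 0` and `Jfun ψ ≤ (1/4)‖φ‖²`. -/
lemma scale_to_zero (h : IsH1 φ) (hne : φ ≠ 0) (hK : K0 φ ≤ 0) :
    ∃ ψ, IsH1 ψ ∧ ψ ≠ 0 ∧ K0 ψ = 0 ∧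
      Jfun ψ ≤ (1 / 4) * ((∫ x, ‖gradient φ x‖ ^ 2) + ∫ x, |φ x| ^ 2) := by
  obtain ⟨hd, hp, hg, hq⟩ := h
  set G := ∫ x, ‖gradient φ x‖ ^ 2 with hG
  set P := ∫ x, |φ x| ^ 2 with hP
  set Q := ∫ x, |φ x| ^ 4 with hQ
  have hK' : G + P - Q ≤ 0 := by rw [← K0_eq ⟨hd, hp, hg, hq⟩]; exact hK
  have hPpos : 0 < P := sq_int_pos ⟨hd, hp, hg, hq⟩ hne
  have hGnn : 0 ≤ G := integral_nonneg fun x => by positivity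
  have hSpos : 0 < G + P := by linarith
  have hQS : G + P ≤ Q := by linarith
  have hQpos : 0 < Q := lt_of_lt_of_le hSpos hQS
  set t : ℝ := (G + P) / Q with ht
  have htpos : 0 < t := div_pos hSpos hQpos
  have htle : t ≤ 1 := (div_le_one hQpos).mpr hQS
  have htQ : t * Q = G + P := div_mul_cancel₀ _ (ne_of_gt hQpos)
  set l : ℝ := Real.sqrt t with hl
  have hl2 : l ^ 2 = t := Real.sq_sqrt htpos.le
  have hlpos : 0 < l := Real.sqrt_pos.mpr htpos
  refine ⟨fun y => l * φ y, ?_, ?_, ?_, ?_⟩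
  case _ =>
    refine ⟨hd.const_mul l, ?_, ?_, ?_⟩
    · have : (fun x => |l * φ x| ^ 2) = fun x => l ^ 2 * |φ x| ^ 2 := by
        funext x; rw [abs_mul, mul_pow, sq_abs]
      rw [this]; exact hp.const_mul _
    · have : (fun x => ‖gradient (fun y => l * φ y) x‖ ^ 2) =
          fun x => l ^ 2 * ‖gradient φ x‖ ^ 2 := by
        funext x
        rw [grad_const_mul hd, norm_smul, Real.norm_eq_abs, mul_pow, sq_abs]
      rw [this]; exact hg.const_mul _
    · have : (fun x => |l * φ x| ^ 4) = fun x => l ^ 4 * |φ x| ^ 4 := by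
        funext x; rw [abs_mul, mul_pow, abs_of_pos hlpos]
      rw [this]; exact hq.const_mul _
  case _ =>
    intro hzero
    obtain ⟨x₀, hx₀⟩ := Function.ne_iff.mp hne
    have := congrFun hzero x₀
    simp only [Pi.zero_apply, mul_eq_zero] at this
    rcases this with h | h
    · exact absurd h (ne_of_gt hlpos)
    · exact hx₀ h
  all_goals {
    have hIg : (∫ x, ‖gradient (fun y => l * φ y) x‖ ^ 2) = t * G := by
      have : (fun x => ‖gradient (fun y => l * φ y) x‖ ^ 2) =
          fun x => l ^ 2 * ‖gradient φ x‖ ^ 2 := by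
        funext x
        rw [grad_const_mul hd, norm_smul, Real.norm_eq_abs, mul_pow, sq_abs]
      rw [this, integral_const_mul, hl2]
    have hIp : (∫ x, |l * φ x| ^ 2) = t * P := by
      have : (fun x => |l * φ x| ^ 2) = fun x => l ^ 2 * |φ x| ^ 2 := by
        funext x; rw [abs_mul, mul_pow, sq_abs]
      rw [this, integral_const_mul, hl2]
    have hIq : (∫ x, |l * φ x| ^ 4) = t ^ 2 * Q := by
      have : (fun x => |l * φ x| ^ 4) = fun x => (l ^ 2) ^ 2 * |φ x| ^ 4 := by
        funext x; rw [abs_mul, mul_pow, abs_of_pos hlpos]; ring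
      rw [this, integral_const_mul, hl2]
    have hpsiH1 : IsH1 (fun y => l * φ y) := by
      refine ⟨hd.const_mul l, ?_, ?_, ?_⟩
      · have : (fun x => |l * φ x| ^ 2) = fun x => l ^ 2 * |φ x| ^ 2 := by
          funext x; rw [abs_mul, mul_pow, sq_abs]
        rw [this]; exact hp.const_mul _
      · have : (fun x => ‖gradient (fun y => l * φ y) x‖ ^ 2) =
            fun x => l ^ 2 * ‖gradient φ x‖ ^ 2 := by
          funext x
          rw [grad_const_mul hd, norm_smul, Real.norm_eq_abs, mul_pow, sq_abs]
        rw [this]; exact hg.const_mul _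
      · have : (fun x => |l * φ x| ^ 4) = fun x => l ^ 4 * |φ x| ^ 4 := by
          funext x; rw [abs_mul, mul_pow, abs_of_pos hlpos]
        rw [this]; exact hq.const_mul _
    first
    | -- K0 = 0
      (rw [K0_eq hpsiH1, hIg, hIp, hIq]
       have : t ^ 2 * Q = t * (G + P) := by rw [sq, mul_assoc, htQ]
       rw [this]; ring)
    | -- Jfun bound
      (rw [Jfun_eq hpsiH1, hIg, hIp, hIq]
       have h1 : t ^ 2 * Q = t * (G + P) := by rw [sq, mul_assoc, htQ]
       rw [h1]
       have : (t * G + t * P) / 2 - t * (G + P) / 4 = t * ((G + P) / 4) := by ring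
       rw [this]
       calc t * ((G + P) / 4) ≤ 1 * ((G + P) / 4) := by
              apply mul_le_mul_of_nonneg_right htle; linarith
         _ = 1 / 4 * (G + P) := by ring) }

end Aux

/-- The two constrained infima coincide:
`inf{J(φ) : φ ≠ 0, K₀(φ) = 0} = inf{(1/4)‖φ‖²_{H¹} : φ ≠ 0, K₀(φ) ≤ 0}`. -/
theorem constrained_infima_equal :
    sInf {c : ℝ | ∃ φ : EuclideanSpace ℝ (Fin 3) → ℝ,
        IsH1 φ ∧ φ ≠ 0 ∧ K0 φ = 0 ∧ c = Jfun φ} =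
    sInf {c : ℝ | ∃ φ : EuclideanSpace ℝ (Fin 3) → ℝ,
        IsH1 φ ∧ φ ≠ 0 ∧ K0 φ ≤ 0 ∧
        c = (1 / 4) * ((∫ x, ‖gradient φ x‖ ^ 2) + ∫ x, |φ x| ^ 2)} := by
  set A := {c : ℝ | ∃ φ : EuclideanSpace ℝ (Fin 3) → ℝ,
      IsH1 φ ∧ φ ≠ 0 ∧ K0 φ = 0 ∧ c = Jfun φ} with hA
  set B := {c : ℝ | ∃ φ : EuclideanSpace ℝ (Fin 3) → ℝ,
      IsH1 φ ∧ φ ≠ 0 ∧ K0 φ ≤ 0 ∧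
      c = (1 / 4) * ((∫ x, ‖gradient φ x‖ ^ 2) + ∫ x, |φ x| ^ 2)} with hB
  -- A ⊆ B
  have hAB : A ⊆ B := by
    rintro c ⟨φ, hφ, hne, hK0, rfl⟩
    refine ⟨φ, hφ, hne, le_of_eq hK0, ?_⟩
    have hKeq := K0_eq hφ
    rw [hK0] at hKeq
    rw [Jfun_eq hφ]
    have hQ : (∫ x, |φ x| ^ 4) = (∫ x, ‖gradient φ x‖ ^ 2) + ∫ x, |φ x| ^ 2 := by linarith
    rw [hQ]; ring
  -- elements nonneg
  have hAnn : ∀ c ∈ A, (0 : ℝ) ≤ c := by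
    rintro c ⟨φ, hφ, hne, hK0, rfl⟩
    have hKeq := K0_eq hφ
    rw [hK0] at hKeq
    have hQ : (∫ x, |φ x| ^ 4) = (∫ x, ‖gradient φ x‖ ^ 2) + ∫ x, |φ x| ^ 2 := by linarith
    rw [Jfun_eq hφ, hQ]
    have hPpos : 0 < ∫ x, |φ x| ^ 2 := sq_int_pos hφ hne
    have hGnn : 0 ≤ ∫ x, ‖gradient φ x‖ ^ 2 := integral_nonneg fun x => by positivity
    linarith
  have hBnn : ∀ c ∈ B, (0 : ℝ) ≤ c := by
    rintro c ⟨φ, hφ, hne, hK0, rfl⟩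
    have hPpos : 0 < ∫ x, |φ x| ^ 2 := sq_int_pos hφ hne
    have hGnn : 0 ≤ ∫ x, ‖gradient φ x‖ ^ 2 := integral_nonneg fun x => by positivity
    linarith
  have hAbdd : BddBelow A := ⟨0, hAnn⟩
  have hBbdd : BddBelow B := ⟨0, hBnn⟩
  by_cases hBe : B = ∅
  · have hAe : A = ∅ := Set.eq_empty_of_subset_empty (hBe ▸ hAB)
    rw [hAe, hBe]
  · have hBne : B.Nonempty := Set.nonempty_iff_ne_empty.mpr hBe
    -- A is nonempty: scale a witness from B
    obtain ⟨b, φ₀, hφ₀, hne₀, hK₀, hb⟩ := id hBne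
    obtain ⟨ψ₀, hψ₀, hψne₀, hψK₀, hψJ₀⟩ := scale_to_zero hφ₀ hne₀ hK₀
    have hAne : A.Nonempty := ⟨Jfun ψ₀, ψ₀, hψ₀, hψne₀, hψK₀, rfl⟩
    apply le_antisymm
    · -- sInf A ≤ sInf B
      apply le_csInf hBne
      rintro c ⟨φ, hφ, hne, hK0, rfl⟩
      obtain ⟨ψ, hψ, hψne, hψK, hψJ⟩ := scale_to_zero hφ hne hK0
      exact le_trans (csInf_le hAbdd ⟨ψ, hψ, hψne, hψK, rfl⟩) hψJ
    · exact csInf_le_csInf hBbdd hAne hAB
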